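/- The function α ↦ φ(Φ⁻¹(α)) is concave on (0,1), where φ is the standard Gaussian density and Φ⁻¹ the inverse of the standard Gaussian CDF. -/

import Mathlib

open Real MeasureTheory Set Filter Topology

/-- Standard normal density φ(z) = (1/√(2π))·exp(-z²/2). -/
noncomputable def gaussPdf (z : ℝ) : ℝ := (Real.sqrt (2 * Real.pi))⁻¹ * Real.exp (-z ^ 2 / 2)

/-- Standard normal CDF Φ(z) = ∫_{-∞}^z φ(t) dt. -/
noncomputable def gaussCdf (z : ℝ) : ℝ := ∫ t in Set.Iic z, gaussPdf t

/-- f(z) = z·Φ(z) + φ(z). -/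
noncomputable def stdF (z : ℝ) : ℝ := z * gaussCdf z + gaussPdf z

/-- Inverse of the standard normal CDF. -/
noncomputable def gaussCdfInv : ℝ → ℝ := Function.invFun gaussCdf

lemma gaussPdf_pos (z : ℝ) : 0 < gaussPdf z := by
  unfold gaussPdf
  positivity

lemma gaussPdf_continuous : Continuous gaussPdf := by
  unfold gaussPdf
  fun_prop

lemma gaussPdf_integrable : Integrable gaussPdf := by
  have h : Integrable (fun x : ℝ => Real.exp (-(1/2 : ℝ) * x ^ 2)) :=
    integrable_exp_neg_mul_sq (by norm_num)
  have h2 := h.const_mul (Real.sqrt (2 * Real.pi))⁻¹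
  have : gaussPdf = fun x : ℝ => (Real.sqrt (2 * Real.pi))⁻¹ * Real.exp (-(1/2 : ℝ) * x ^ 2) := by
    funext x
    unfold gaussPdf
    congr 1
    ring_nf
  rw [this]
  exact h2

lemma gaussPdf_hasDerivAt (z : ℝ) : HasDerivAt gaussPdf (-z * gaussPdf z) z := by
  have h1 : HasDerivAt (fun x : ℝ => -x ^ 2 / 2) (-z) z := by
    have := ((hasDerivAt_pow 2 z).neg.div_const 2)
    refine this.congr_deriv ?_
    push_cast
    ring
  have h2 := h1.exp.const_mul (Real.sqrt (2 * Real.pi))⁻¹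
  have heq : gaussPdf = fun x : ℝ => (Real.sqrt (2 * Real.pi))⁻¹ * Real.exp (-x ^ 2 / 2) := rfl
  have h3 : -z * gaussPdf z = (Real.sqrt (2 * Real.pi))⁻¹ * (Real.exp (-z ^ 2 / 2) * -z) := by
    unfold gaussPdf; ring
  rw [h3]
  exact h2

lemma gaussCdf_hasDerivAt (z : ℝ) : HasDerivAt gaussCdf (gaussPdf z) z := by
  have heq : ∀ x : ℝ, gaussCdf x = gaussCdf 0 + ∫ t in (0:ℝ)..x, gaussPdf t := by
    intro x
    have h := intervalIntegral.integral_Iic_sub_Iic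
      (gaussPdf_integrable.integrableOn (s := Iic 0)) (gaussPdf_integrable.integrableOn (s := Iic x))
    unfold gaussCdf
    linarith
  have H : HasDerivAt (fun x : ℝ => gaussCdf 0 + ∫ t in (0:ℝ)..x, gaussPdf t) (gaussPdf z) z := by
    have H0 : HasDerivAt (fun u : ℝ => ∫ t in (0:ℝ)..u, gaussPdf t) (gaussPdf z) z :=
      intervalIntegral.integral_hasDerivAt_right
        (gaussPdf_integrable.intervalIntegrable)
        (gaussPdf_continuous.stronglyMeasurable.stronglyMeasurableAtFilter)
        gaussPdf_continuous.continuousAt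
    exact H0.const_add (gaussCdf 0)
  exact H.congr_of_eventuallyEq (Filter.Eventually.of_forall heq)

lemma gaussCdf_strictMono : StrictMono gaussCdf := by
  apply strictMono_of_deriv_pos
  intro x
  rw [(gaussCdf_hasDerivAt x).deriv]
  exact gaussPdf_pos x

lemma gaussCdf_continuous : Continuous gaussCdf :=
  continuous_iff_continuousAt.2 fun x => (gaussCdf_hasDerivAt x).continuousAt

lemma gaussCdf_nonneg (z : ℝ) : 0 ≤ gaussCdf z :=
  setIntegral_nonneg measurableSet_Iic fun t _ => (gaussPdf_pos t).le

lemma gaussCdf_tendsto_atBot : Tendsto gaussCdf atBot (𝓝 0) := by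
  have h := intervalIntegral_tendsto_integral_Iic (0:ℝ)
    (gaussPdf_integrable.integrableOn (s := Iic 0)) tendsto_id
  have heq : ∀ a : ℝ, gaussCdf a = gaussCdf 0 - ∫ t in a..(0:ℝ), gaussPdf t := by
    intro a
    have hh := intervalIntegral.integral_Iic_sub_Iic
      (gaussPdf_integrable.integrableOn (s := Iic a)) (gaussPdf_integrable.integrableOn (s := Iic 0))
    unfold gaussCdf
    linarith
  have : Tendsto (fun a : ℝ => gaussCdf 0 - ∫ t in a..(0:ℝ), gaussPdf t) atBot
      (𝓝 (gaussCdf 0 - gaussCdf 0)) := tendsto_const_nhds.sub h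
  rw [sub_self] at this
  exact this.congr fun a => (heq a).symm

lemma integral_gaussPdf : ∫ x, gaussPdf x = 1 := by
  have heq : gaussPdf = fun x : ℝ => (Real.sqrt (2 * Real.pi))⁻¹ * Real.exp (-(1/2 : ℝ) * x ^ 2) := by
    funext x
    unfold gaussPdf
    congr 1
    ring_nf
  rw [heq, MeasureTheory.integral_const_mul, integral_gaussian]
  have h2 : Real.pi / (1/2 : ℝ) = 2 * Real.pi := by ring
  rw [h2]
  rw [inv_mul_cancel₀]
  positivity

lemma gaussCdf_tendsto_atTop : Tendsto gaussCdf atTop (𝓝 1) := by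
  have h := intervalIntegral_tendsto_integral_Ioi (0:ℝ)
    (gaussPdf_integrable.integrableOn (s := Ioi 0)) tendsto_id
  have heq : ∀ b : ℝ, gaussCdf b = gaussCdf 0 + ∫ t in (0:ℝ)..b, gaussPdf t := by
    intro b
    have hh := intervalIntegral.integral_Iic_sub_Iic
      (gaussPdf_integrable.integrableOn (s := Iic 0)) (gaussPdf_integrable.integrableOn (s := Iic b))
    unfold gaussCdf
    linarith
  have htot : gaussCdf 0 + ∫ t in Ioi (0:ℝ), gaussPdf t = 1 := by
    unfold gaussCdf
    rw [intervalIntegral.integral_Iic_add_Ioi (gaussPdf_integrable.integrableOn) (gaussPdf_integrable.integrableOn)]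
    exact integral_gaussPdf
  have : Tendsto (fun b : ℝ => gaussCdf 0 + ∫ t in (0:ℝ)..b, gaussPdf t) atTop
      (𝓝 (gaussCdf 0 + ∫ t in Ioi (0:ℝ), gaussPdf t)) := tendsto_const_nhds.add h
  rw [htot] at this
  exact this.congr fun b => (heq b).symm

lemma gaussCdf_mem_Ioo (x : ℝ) : gaussCdf x ∈ Ioo (0:ℝ) 1 := by
  constructor
  · exact lt_of_le_of_lt (gaussCdf_nonneg (x - 1)) (gaussCdf_strictMono (by linarith))
  · have h1 : gaussCdf (x + 1) ≤ 1 :=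
      gaussCdf_strictMono.monotone.ge_of_tendsto gaussCdf_tendsto_atTop (x + 1)
    exact lt_of_lt_of_le (gaussCdf_strictMono (by linarith)) h1

lemma mem_range_gaussCdf {α : ℝ} (hα : α ∈ Ioo (0:ℝ) 1) : α ∈ range gaussCdf := by
  obtain ⟨a, ha⟩ := (gaussCdf_tendsto_atBot.eventually (gt_mem_nhds hα.1)).exists
  obtain ⟨b, hb⟩ := (gaussCdf_tendsto_atTop.eventually (lt_mem_nhds hα.2)).exists
  exact intermediate_value_univ a b gaussCdf_continuous ⟨ha.le, hb.le⟩

lemma gaussCdfInv_gaussCdf (z : ℝ) : gaussCdfInv (gaussCdf z) = z :=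
  Function.leftInverse_invFun gaussCdf_strictMono.injective z

lemma gaussCdf_gaussCdfInv {α : ℝ} (hα : α ∈ Ioo (0:ℝ) 1) : gaussCdf (gaussCdfInv α) = α :=
  Function.invFun_eq (mem_range_gaussCdf hα)

noncomputable def gaussOrderIso : ℝ ≃o Ioo (0:ℝ) 1 :=
  StrictMono.orderIsoOfSurjective (fun x => ⟨gaussCdf x, gaussCdf_mem_Ioo x⟩)
    (fun a b h => Subtype.mk_lt_mk.2 (gaussCdf_strictMono h))
    (fun y => by
      obtain ⟨z, hz⟩ := mem_range_gaussCdf y.2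
      exact ⟨z, Subtype.ext hz⟩)

lemma gaussCdfInv_continuousOn : ContinuousOn gaussCdfInv (Ioo (0:ℝ) 1) := by
  rw [continuousOn_iff_continuous_restrict]
  have hc : Continuous fun y : Ioo (0:ℝ) 1 => (gaussOrderIso.symm y : ℝ) :=
    gaussOrderIso.symm.continuous
  convert hc using 1
  funext y
  have hz : gaussCdf (gaussOrderIso.symm y) = (y : ℝ) := by
    have := gaussOrderIso.apply_symm_apply y
    exact congrArg Subtype.val this
  show gaussCdfInv (y : ℝ) = gaussOrderIso.symm y
  rw [← hz, gaussCdfInv_gaussCdf]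

lemma fstar_hasDerivAt {α : ℝ} (hα : α ∈ Ioo (0:ℝ) 1) :
    HasDerivAt (fun a => gaussPdf (gaussCdfInv a)) (-gaussCdfInv α) α := by
  set z := gaussCdfInv α with hzdef
  have hz : gaussCdf z = α := gaussCdf_gaussCdfInv hα
  have hcont : ContinuousAt gaussCdfInv α :=
    gaussCdfInv_continuousOn.continuousAt (isOpen_Ioo.mem_nhds hα)
  have hinv : HasDerivAt gaussCdfInv (gaussPdf z)⁻¹ α := by
    apply HasDerivAt.of_local_left_inverse hcont
      (by rw [← hzdef]; exact gaussCdf_hasDerivAt z) (gaussPdf_pos z).ne'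
    filter_upwards [isOpen_Ioo.mem_nhds hα] with y hy
    exact gaussCdf_gaussCdfInv hy
  have hpdf : HasDerivAt gaussPdf (-z * gaussPdf z) z := gaussPdf_hasDerivAt z
  have hcomp := hpdf.comp α hinv
  rw [mul_inv_cancel_right₀ (gaussPdf_pos z).ne' (-z)] at hcomp
  exact hcomp

theorem stmt_6 : ConcaveOn ℝ (Set.Ioo (0 : ℝ) 1) (fun α => gaussPdf (gaussCdfInv α)) := by
  have hint : interior (Ioo (0:ℝ) 1) = Ioo (0:ℝ) 1 := isOpen_Ioo.interior_eq
  apply AntitoneOn.concaveOn_of_deriv (convex_Ioo 0 1)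
  · intro α hα
    exact (fstar_hasDerivAt hα).continuousAt.continuousWithinAt
  · rw [hint]
    intro α hα
    exact (fstar_hasDerivAt hα).differentiableAt.differentiableWithinAt
  · rw [hint]
    intro a ha b hb hab
    rw [(fstar_hasDerivAt ha).deriv, (fstar_hasDerivAt hb).deriv, neg_le_neg_iff]
    rw [← gaussCdf_strictMono.le_iff_le, gaussCdf_gaussCdfInv ha, gaussCdf_gaussCdfInv hb]
    exact hab
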